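/- For a finite MDP with rewards in [0,1] and discount γ ∈ (0,1), the map π ↦ Q^π satisfies ‖Q^{π_1} − Q^{π_2}‖ ≤ (γ |S| |A| / (1−γ)²) ‖π_1 − π_2‖, where both norms are Euclidean norms on the vectorized objects. -/

import Mathlib

open Finset

private lemma wsum_mem {ι : Type*} [Fintype ι] (w v : ι → ℝ)
    (hw0 : ∀ i, 0 ≤ w i) (hw1 : ∑ i, w i = 1)
    (hv0 : ∀ i, 0 ≤ v i) (hv1 : ∀ i, v i ≤ 1) :
    0 ≤ ∑ i, w i * v i ∧ ∑ i, w i * v i ≤ 1 :=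
  ⟨Finset.sum_nonneg fun i _ => mul_nonneg (hw0 i) (hv0 i), by
    calc ∑ i, w i * v i ≤ ∑ i, w i :=
          Finset.sum_le_sum fun i _ => mul_le_of_le_one_right (hw0 i) (hv1 i)
      _ = 1 := hw1⟩

private lemma wsum_abs_le {ι : Type*} [Fintype ι] (w x : ι → ℝ) (C : ℝ)
    (hw0 : ∀ i, 0 ≤ w i) (hw1 : ∑ i, w i = 1) (hx : ∀ i, |x i| ≤ C) :
    |∑ i, w i * x i| ≤ C := by
  calc |∑ i, w i * x i| ≤ ∑ i, |w i * x i| := Finset.abs_sum_le_sum_abs _ _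
    _ = ∑ i, w i * |x i| := by
        refine Finset.sum_congr rfl fun i _ => ?_
        rw [abs_mul, abs_of_nonneg (hw0 i)]
    _ ≤ ∑ i, w i * C := Finset.sum_le_sum fun i _ =>
          mul_le_mul_of_nonneg_left (hx i) (hw0 i)
    _ = C := by rw [← Finset.sum_mul, hw1, one_mul]

private lemma mdp_iter_mem {S A : Type*} [Fintype S] [Fintype A]
    (P : S → A → S → ℝ) (hP0 : ∀ s a s', 0 ≤ P s a s') (hP1 : ∀ s a, ∑ s', P s a s' = 1)
    (R : S → A → ℝ) (hR0 : ∀ s a, 0 ≤ R s a) (hR1 : ∀ s a, R s a ≤ 1)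
    (π : S → A → ℝ) (hπ0 : ∀ s a, 0 ≤ π s a) (hπ1 : ∀ s, ∑ a, π s a = 1) (k : ℕ) :
    ∀ s, 0 ≤ ((fun f t => ∑ a, π t a * ∑ s', P t a s' * f s')^[k]
        (fun t => ∑ a, π t a * R t a)) s ∧
      ((fun f t => ∑ a, π t a * ∑ s', P t a s' * f s')^[k]
        (fun t => ∑ a, π t a * R t a)) s ≤ 1 := by
  induction k with
  | zero =>
    intro s
    simpa using wsum_mem (π s) (R s) (hπ0 s) (hπ1 s) (hR0 s) (hR1 s)
  | succ k ih =>
    intro s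
    rw [Function.iterate_succ_apply']
    exact wsum_mem (π s) _ (hπ0 s) (hπ1 s)
      (fun a => (wsum_mem (P s a) _ (hP0 s a) (hP1 s a)
        (fun s' => (ih s').1) (fun s' => (ih s').2)).1)
      (fun a => (wsum_mem (P s a) _ (hP0 s a) (hP1 s a)
        (fun s' => (ih s').1) (fun s' => (ih s').2)).2)

private lemma mdp_iter_diff {S A : Type*} [Fintype S] [Fintype A]
    (P : S → A → S → ℝ) (hP0 : ∀ s a s', 0 ≤ P s a s') (hP1 : ∀ s a, ∑ s', P s a s' = 1)
    (R : S → A → ℝ) (hR0 : ∀ s a, 0 ≤ R s a) (hR1 : ∀ s a, R s a ≤ 1)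
    (π₁ π₂ : S → A → ℝ)
    (hπ₁0 : ∀ s a, 0 ≤ π₁ s a) (hπ₁1 : ∀ s, ∑ a, π₁ s a = 1)
    (hπ₂0 : ∀ s a, 0 ≤ π₂ s a) (hπ₂1 : ∀ s, ∑ a, π₂ s a = 1) (k : ℕ) :
    ∀ s, |((fun f t => ∑ a, π₁ t a * ∑ s', P t a s' * f s')^[k]
        (fun t => ∑ a, π₁ t a * R t a)) s -
      ((fun f t => ∑ a, π₂ t a * ∑ s', P t a s' * f s')^[k]
        (fun t => ∑ a, π₂ t a * R t a)) s| ≤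
      ((k : ℝ) + 1) * ∑ s, ∑ a, |π₁ s a - π₂ s a| := by
  set δ : ℝ := ∑ s, ∑ a, |π₁ s a - π₂ s a| with hδ
  have hδs : ∀ s : S, ∑ a, |π₁ s a - π₂ s a| ≤ δ := fun s =>
    Finset.single_le_sum (f := fun s => ∑ a, |π₁ s a - π₂ s a|)
      (fun t _ => Finset.sum_nonneg fun a _ => abs_nonneg _) (Finset.mem_univ s)
  induction k with
  | zero =>
    intro s
    simp only [Function.iterate_zero, id, Nat.cast_zero, zero_add, one_mul]
    calc |∑ a, π₁ s a * R s a - ∑ a, π₂ s a * R s a|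
        = |∑ a, (π₁ s a - π₂ s a) * R s a| := by
          rw [← Finset.sum_sub_distrib]; congr 1
          exact Finset.sum_congr rfl fun a _ => by ring
      _ ≤ ∑ a, |(π₁ s a - π₂ s a) * R s a| := Finset.abs_sum_le_sum_abs _ _
      _ ≤ ∑ a, |π₁ s a - π₂ s a| := Finset.sum_le_sum fun a _ => by
          rw [abs_mul]
          exact mul_le_of_le_one_right (abs_nonneg _)
            (abs_le.mpr ⟨by linarith [hR0 s a, hR1 s a], hR1 s a⟩)
      _ ≤ δ := hδs s
  | succ k ih =>
    intro s
    rw [Function.iterate_succ_apply', Function.iterate_succ_apply']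
    set g₁ := (fun f t => ∑ a, π₁ t a * ∑ s', P t a s' * f s')^[k]
        (fun t => ∑ a, π₁ t a * R t a) with hg₁
    set g₂ := (fun f t => ∑ a, π₂ t a * ∑ s', P t a s' * f s')^[k]
        (fun t => ∑ a, π₂ t a * R t a) with hg₂
    have hg₂mem := mdp_iter_mem P hP0 hP1 R hR0 hR1 π₂ hπ₂0 hπ₂1 k
    have key : ∑ a, π₁ s a * ∑ s', P s a s' * g₁ s' - ∑ a, π₂ s a * ∑ s', P s a s' * g₂ s'
        = (∑ a, π₁ s a * ((∑ s', P s a s' * g₁ s') - ∑ s', P s a s' * g₂ s'))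
          + ∑ a, (π₁ s a - π₂ s a) * ∑ s', P s a s' * g₂ s' := by
      rw [← Finset.sum_add_distrib, ← Finset.sum_sub_distrib]
      exact Finset.sum_congr rfl fun a _ => by ring
    show |∑ a, π₁ s a * ∑ s', P s a s' * g₁ s' - ∑ a, π₂ s a * ∑ s', P s a s' * g₂ s'| ≤ _
    rw [key]
    have h1 : |∑ a, π₁ s a * ((∑ s', P s a s' * g₁ s') - ∑ s', P s a s' * g₂ s')|
        ≤ ((k : ℝ) + 1) * δ := by
      refine wsum_abs_le (π₁ s) _ _ (hπ₁0 s) (hπ₁1 s) fun a => ?_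
      rw [← Finset.sum_sub_distrib]
      have : ∀ s', P s a s' * g₁ s' - P s a s' * g₂ s' = P s a s' * (g₁ s' - g₂ s') :=
        fun s' => by ring
      simp_rw [this]
      exact wsum_abs_le (P s a) _ _ (hP0 s a) (hP1 s a) fun s' => ih s'
    have h2 : |∑ a, (π₁ s a - π₂ s a) * ∑ s', P s a s' * g₂ s'| ≤ δ := by
      calc |∑ a, (π₁ s a - π₂ s a) * ∑ s', P s a s' * g₂ s'|
          ≤ ∑ a, |(π₁ s a - π₂ s a) * ∑ s', P s a s' * g₂ s'| :=
            Finset.abs_sum_le_sum_abs _ _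
        _ ≤ ∑ a, |π₁ s a - π₂ s a| := Finset.sum_le_sum fun a _ => by
            rw [abs_mul]
            refine mul_le_of_le_one_right (abs_nonneg _) (abs_le.mpr ⟨?_, ?_⟩)
            · have := (wsum_mem (P s a) g₂ (hP0 s a) (hP1 s a)
                (fun s' => (hg₂mem s').1) (fun s' => (hg₂mem s').2)).1
              linarith
            · exact (wsum_mem (P s a) g₂ (hP0 s a) (hP1 s a)
                (fun s' => (hg₂mem s').1) (fun s' => (hg₂mem s').2)).2
        _ ≤ δ := hδs s
    calc |_ + _| ≤ _ + _ := abs_add_le _ _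
      _ ≤ ((k : ℝ) + 1) * δ + δ := add_le_add h1 h2
      _ ≤ (((k + 1 : ℕ) : ℝ) + 1) * δ := by push_cast; nlinarith

/-- Lipschitz continuity of `π ↦ Q^π` in Euclidean norm:
`‖Q^{π₁} - Q^{π₂}‖ ≤ (γ|S||A|/(1-γ)²) ‖π₁ - π₂‖` for a finite MDP with rewards in `[0,1]`. -/
theorem q_lipschitz_in_policy {S A : Type*} [Fintype S] [Fintype A]
    (P : S → A → S → ℝ) (hP0 : ∀ s a s', 0 ≤ P s a s') (hP1 : ∀ s a, ∑ s', P s a s' = 1)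
    (R : S → A → ℝ) (hR0 : ∀ s a, 0 ≤ R s a) (hR1 : ∀ s a, R s a ≤ 1)
    (γ : ℝ) (hγ0 : 0 < γ) (hγ1 : γ < 1)
    (π₁ π₂ : S → A → ℝ)
    (hπ₁0 : ∀ s a, 0 ≤ π₁ s a) (hπ₁1 : ∀ s, ∑ a, π₁ s a = 1)
    (hπ₂0 : ∀ s a, 0 ≤ π₂ s a) (hπ₂1 : ∀ s, ∑ a, π₂ s a = 1)
    (V₁ V₂ : S → ℝ)
    (hV₁ : ∀ s, V₁ s = ∑' k : ℕ, γ ^ k *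
      ((fun f t => ∑ a, π₁ t a * ∑ s', P t a s' * f s')^[k]
        (fun t => ∑ a, π₁ t a * R t a)) s)
    (hV₂ : ∀ s, V₂ s = ∑' k : ℕ, γ ^ k *
      ((fun f t => ∑ a, π₂ t a * ∑ s', P t a s' * f s')^[k]
        (fun t => ∑ a, π₂ t a * R t a)) s)
    (Q₁ Q₂ : S → A → ℝ)
    (hQ₁ : ∀ s a, Q₁ s a = R s a + γ * ∑ s', P s a s' * V₁ s')
    (hQ₂ : ∀ s a, Q₂ s a = R s a + γ * ∑ s', P s a s' * V₂ s') :
    Real.sqrt (∑ s, ∑ a, (Q₁ s a - Q₂ s a) ^ 2)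
      ≤ (γ * (Fintype.card S : ℝ) * (Fintype.card A : ℝ) / (1 - γ) ^ 2) *
          Real.sqrt (∑ s, ∑ a, (π₁ s a - π₂ s a) ^ 2) := by
  set δ : ℝ := ∑ s, ∑ a, |π₁ s a - π₂ s a| with hδdef
  have hδ0 : 0 ≤ δ := Finset.sum_nonneg fun s _ =>
    Finset.sum_nonneg fun a _ => abs_nonneg _
  have h1γ : (0:ℝ) < 1 - γ := by linarith
  -- summability facts
  have hγn : ‖γ‖ < 1 := by rw [Real.norm_eq_abs, abs_of_pos hγ0]; exact hγ1
  have hgeo := hasSum_geometric_of_lt_one hγ0.le hγ1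
  have hmul := hasSum_coe_mul_geometric_of_norm_lt_one (𝕜 := ℝ) hγn
  have hsum1 : HasSum (fun n : ℕ => ((n : ℝ) + 1) * γ ^ n) (1 / (1 - γ) ^ 2) := by
    have := hmul.add hgeo
    have heq : γ / (1 - γ) ^ 2 + (1 - γ)⁻¹ = 1 / (1 - γ) ^ 2 := by
      field_simp
      ring
    rw [heq] at this
    convert this using 2 with n
    · rfl
    ring
  have hsumδ : HasSum (fun n : ℕ => γ ^ n * (((n : ℝ) + 1) * δ)) (1 / (1 - γ) ^ 2 * δ) := by
    convert hsum1.mul_right δ using 2 with n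
    · rfl
    ring
  -- bounds on iterates
  have hmem₁ := mdp_iter_mem P hP0 hP1 R hR0 hR1 π₁ hπ₁0 hπ₁1
  have hmem₂ := mdp_iter_mem P hP0 hP1 R hR0 hR1 π₂ hπ₂0 hπ₂1
  have hdiff := mdp_iter_diff P hP0 hP1 R hR0 hR1 π₁ π₂ hπ₁0 hπ₁1 hπ₂0 hπ₂1
  set g₁ : ℕ → S → ℝ := fun k => (fun f t => ∑ a, π₁ t a * ∑ s', P t a s' * f s')^[k]
        (fun t => ∑ a, π₁ t a * R t a) with hg₁
  set g₂ : ℕ → S → ℝ := fun k => (fun f t => ∑ a, π₂ t a * ∑ s', P t a s' * f s')^[k]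
        (fun t => ∑ a, π₂ t a * R t a) with hg₂
  have hS1 : ∀ s, Summable (fun k : ℕ => γ ^ k * g₁ k s) := by
    intro s
    refine Summable.of_nonneg_of_le (fun k => mul_nonneg (pow_nonneg hγ0.le k) (hmem₁ k s).1)
      (fun k => ?_) (summable_geometric_of_lt_one hγ0.le hγ1)
    exact mul_le_of_le_one_right (pow_nonneg hγ0.le k) (hmem₁ k s).2
  have hS2 : ∀ s, Summable (fun k : ℕ => γ ^ k * g₂ k s) := by
    intro s
    refine Summable.of_nonneg_of_le (fun k => mul_nonneg (pow_nonneg hγ0.le k) (hmem₂ k s).1)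
      (fun k => ?_) (summable_geometric_of_lt_one hγ0.le hγ1)
    exact mul_le_of_le_one_right (pow_nonneg hγ0.le k) (hmem₂ k s).2
  -- bound on V difference
  have hV : ∀ s, |V₁ s - V₂ s| ≤ δ / (1 - γ) ^ 2 := by
    intro s
    have hdf : Summable (fun k : ℕ => γ ^ k * g₁ k s - γ ^ k * g₂ k s) :=
      (hS1 s).sub (hS2 s)
    have hVdiff : V₁ s - V₂ s = ∑' k : ℕ, (γ ^ k * g₁ k s - γ ^ k * g₂ k s) := by
      rw [hV₁ s, hV₂ s, Summable.tsum_sub (hS1 s) (hS2 s)]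
    rw [hVdiff]
    have habs : ∀ k : ℕ, |γ ^ k * g₁ k s - γ ^ k * g₂ k s| ≤ γ ^ k * (((k : ℝ) + 1) * δ) := by
      intro k
      have : γ ^ k * g₁ k s - γ ^ k * g₂ k s = γ ^ k * (g₁ k s - g₂ k s) := by ring
      rw [this, abs_mul, abs_of_nonneg (pow_nonneg hγ0.le k)]
      exact mul_le_mul_of_nonneg_left (hdiff k s) (pow_nonneg hγ0.le k)
    calc |∑' k : ℕ, (γ ^ k * g₁ k s - γ ^ k * g₂ k s)|
        ≤ ∑' k : ℕ, |γ ^ k * g₁ k s - γ ^ k * g₂ k s| := by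
          have := norm_tsum_le_tsum_norm (f := fun k : ℕ => γ ^ k * g₁ k s - γ ^ k * g₂ k s)
            (by simpa [Real.norm_eq_abs] using hdf.abs)
          simpa [Real.norm_eq_abs] using this
      _ ≤ ∑' k : ℕ, γ ^ k * (((k : ℝ) + 1) * δ) :=
          Summable.tsum_le_tsum habs hdf.abs hsumδ.summable
      _ = 1 / (1 - γ) ^ 2 * δ := hsumδ.tsum_eq
      _ = δ / (1 - γ) ^ 2 := by ring
  -- bound on Q difference
  have hQ : ∀ s a, |Q₁ s a - Q₂ s a| ≤ γ * (δ / (1 - γ) ^ 2) := by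
    intro s a
    have : Q₁ s a - Q₂ s a = γ * ∑ s', P s a s' * (V₁ s' - V₂ s') := by
      rw [hQ₁ s a, hQ₂ s a]
      rw [show ∀ x y z : ℝ, x + γ * y - (x + γ * z) = γ * (y - z) from fun x y z => by ring]
      rw [← Finset.sum_sub_distrib]
      congr 1
      exact Finset.sum_congr rfl fun s' _ => by ring
    rw [this, abs_mul, abs_of_pos hγ0]
    exact mul_le_mul_of_nonneg_left
      (wsum_abs_le (P s a) _ _ (hP0 s a) (hP1 s a) fun s' => hV s') hγ0.le
  set B : ℝ := γ * (δ / (1 - γ) ^ 2) with hBdef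
  have hB0 : 0 ≤ B := mul_nonneg hγ0.le (div_nonneg hδ0 (by positivity))
  set cN : ℝ := (Fintype.card S : ℝ) * (Fintype.card A : ℝ) with hcN
  have hcN0 : (0:ℝ) ≤ cN := by positivity
  -- step 1: LHS ≤ √cN * B
  have step1 : Real.sqrt (∑ s, ∑ a, (Q₁ s a - Q₂ s a) ^ 2) ≤ Real.sqrt cN * B := by
    have hsum : ∑ s, ∑ a, (Q₁ s a - Q₂ s a) ^ 2 ≤ cN * B ^ 2 := by
      calc ∑ s, ∑ a, (Q₁ s a - Q₂ s a) ^ 2 ≤ ∑ s : S, ∑ a : A, B ^ 2 := by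
            refine Finset.sum_le_sum fun s _ => Finset.sum_le_sum fun a _ => ?_
            have := hQ s a
            nlinarith [abs_nonneg (Q₁ s a - Q₂ s a), sq_abs (Q₁ s a - Q₂ s a)]
        _ = cN * B ^ 2 := by simp [hcN, Finset.sum_const]; ring
    calc Real.sqrt (∑ s, ∑ a, (Q₁ s a - Q₂ s a) ^ 2) ≤ Real.sqrt (cN * B ^ 2) :=
          Real.sqrt_le_sqrt hsum
      _ = Real.sqrt cN * B := by
          rw [Real.sqrt_mul hcN0, Real.sqrt_sq hB0]
  -- step 2: δ ≤ √cN * √(∑∑ Δπ²)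
  set E : ℝ := Real.sqrt (∑ s, ∑ a, (π₁ s a - π₂ s a) ^ 2) with hEdef
  have hE0 : 0 ≤ E := Real.sqrt_nonneg _
  have step2 : δ ≤ Real.sqrt cN * E := by
    have hsq : δ ^ 2 ≤ cN * ∑ s, ∑ a, (π₁ s a - π₂ s a) ^ 2 := by
      have := sq_sum_le_card_mul_sum_sq
        (s := (Finset.univ : Finset (S × A))) (f := fun p => |π₁ p.1 p.2 - π₂ p.1 p.2|)
      have hδeq : δ = ∑ p : S × A, |π₁ p.1 p.2 - π₂ p.1 p.2| := by
        rw [hδdef, Fintype.sum_prod_type]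
      have hsq2 : ∑ p : S × A, |π₁ p.1 p.2 - π₂ p.1 p.2| ^ 2
          = ∑ s, ∑ a, (π₁ s a - π₂ s a) ^ 2 := by
        rw [Fintype.sum_prod_type]
        exact Finset.sum_congr rfl fun s _ => Finset.sum_congr rfl fun a _ => sq_abs _
      rw [hδeq, ← hsq2]
      have hcard : ((Finset.univ : Finset (S × A)).card : ℝ) = cN := by
        simp [hcN, Fintype.card_prod]
      calc (∑ p : S × A, |π₁ p.1 p.2 - π₂ p.1 p.2|) ^ 2
          ≤ ((Finset.univ : Finset (S × A)).card : ℝ) *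
            ∑ p : S × A, |π₁ p.1 p.2 - π₂ p.1 p.2| ^ 2 := by exact_mod_cast this
        _ = cN * ∑ p : S × A, |π₁ p.1 p.2 - π₂ p.1 p.2| ^ 2 := by rw [hcard]
    have : δ ≤ Real.sqrt (cN * ∑ s, ∑ a, (π₁ s a - π₂ s a) ^ 2) := by
      rw [show δ = Real.sqrt (δ ^ 2) from (Real.sqrt_sq hδ0).symm]
      exact Real.sqrt_le_sqrt hsq
    calc δ ≤ Real.sqrt (cN * ∑ s, ∑ a, (π₁ s a - π₂ s a) ^ 2) := this
      _ = Real.sqrt cN * E := Real.sqrt_mul hcN0 _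
  -- combine
  calc Real.sqrt (∑ s, ∑ a, (Q₁ s a - Q₂ s a) ^ 2) ≤ Real.sqrt cN * B := step1
    _ ≤ Real.sqrt cN * (γ * ((Real.sqrt cN * E) / (1 - γ) ^ 2)) := by
        have h2 : (0:ℝ) < (1 - γ) ^ 2 := by positivity
        rw [hBdef]
        gcongr
    _ = (Real.sqrt cN * Real.sqrt cN) * γ * E / (1 - γ) ^ 2 := by ring
    _ = γ * (Fintype.card S : ℝ) * (Fintype.card A : ℝ) / (1 - γ) ^ 2 * E := by
        rw [Real.mul_self_sqrt hcN0, hcN]; ring
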